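/- Let f_cl : ℝⁿ → ℝⁿ and ĝ : ℝⁿ → ℝᵖ be differentiable maps, let Ĝ(x) denote the Jacobian (derivative matrix) of ĝ at x, let A_cl be a p×p real matrix, let M be a symmetric positive definite p×p real matrix, and let γ ∈ (0,1). Assume the discrete Lyapunov inequality A_clᵀ M A_cl ⪯ γ M holds (in the Loewner order), that Ĝ(x) has full column rank for every x ∈ ℝⁿ, and that the intertwining relation Ĝ(f_cl(x)) · Df_cl(x) = A_cl · Ĝ(x) holds for every x ∈ ℝⁿ, where Df_cl(x) is the Jacobian of f_cl at x. Then the matrix-valued map W(x) := Ĝ(x)ᵀ M Ĝ(x) is a contraction metric for f_cl: W(x) is symmetric positive definite for every x, and Df_cl(x)ᵀ W(f_cl(x)) Df_cl(x) ⪯ γ W(x) for every x ∈ ℝⁿ. -/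

import Mathlib

open Matrix

/-- The Jacobian (derivative matrix) of a map `h : ℝⁿ → ℝᵐ` at a point `x`. -/
noncomputable def jacobian {n m : ℕ} (h : (Fin n → ℝ) → (Fin m → ℝ)) (x : Fin n → ℝ) :
    Matrix (Fin m) (Fin n) ℝ :=
  LinearMap.toMatrix' (fderiv ℝ h x).toLinearMap

/-- The Loewner order on real matrices: `P ⪯ Q` iff `Q - P` is positive semidefinite. -/
def LoewnerLE {p : ℕ} (P Q : Matrix (Fin p) (Fin p) ℝ) : Prop := (Q - P).PosSemidef

lemma aux_posdef {n p : ℕ} (G : Matrix (Fin p) (Fin n) ℝ) (M : Matrix (Fin p) (Fin p) ℝ)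
    (hM : M.PosDef) (hrank : LinearIndependent ℝ (fun j : Fin n => Gᵀ j)) :
    (Gᵀ * M * G).PosDef := by
  refine Matrix.PosDef.of_dotProduct_mulVec_pos ?_ ?_
  · have := Matrix.isHermitian_conjTranspose_mul_mul G hM.1
    simpa using this
  · intro v hv
    have hGv : G *ᵥ v ≠ 0 := by
      intro h
      apply hv
      have := (Fintype.linearIndependent_iff.mp hrank) v ?_
      · ext j; exact this j
      · ext i
        have := congrFun h i
        simpa [Matrix.mulVec, dotProduct, Finset.sum_apply, mul_comm] using this
    have hpos := hM.dotProduct_mulVec_pos hGv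
    have key : v ⬝ᵥ ((Gᵀ * M * G) *ᵥ v) = (G *ᵥ v) ⬝ᵥ (M *ᵥ (G *ᵥ v)) := by
      rw [← Matrix.mulVec_mulVec, ← Matrix.mulVec_mulVec, dotProduct_mulVec,
        Matrix.vecMul_transpose]
    simpa [star, key] using hpos

lemma aux_contract {n p : ℕ} (G Gf : Matrix (Fin p) (Fin n) ℝ) (D : Matrix (Fin n) (Fin n) ℝ)
    (Acl M : Matrix (Fin p) (Fin p) ℝ) (γ : ℝ)
    (hLyap : (γ • M - Aclᵀ * M * Acl).PosSemidef)
    (hint : Gf * D = Acl * G) :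
    (γ • (Gᵀ * M * G) - Dᵀ * (Gfᵀ * M * Gf) * D).PosSemidef := by
  have h1 : Dᵀ * (Gfᵀ * M * Gf) * D = (Gf * D)ᵀ * M * (Gf * D) := by
    rw [Matrix.transpose_mul]; simp only [Matrix.mul_assoc]
  have h2 : γ • (Gᵀ * M * G) - Dᵀ * (Gfᵀ * M * Gf) * D
      = Gᵀ * (γ • M - Aclᵀ * M * Acl) * G := by
    rw [h1, hint, Matrix.transpose_mul, Matrix.mul_sub, Matrix.sub_mul,
      Matrix.mul_smul, Matrix.smul_mul]
    simp only [Matrix.mul_assoc]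
  rw [h2]
  have := hLyap.conjTranspose_mul_mul_same G
  simpa using this

/-- If the lifted closed-loop matrix `A_cl` satisfies the discrete Lyapunov
inequality `A_clᵀ M A_cl ⪯ γ M` for a symmetric positive definite `M` and `γ ∈ (0,1)`, the
Jacobian `Ĝ(x)` of the lifting map has full column rank everywhere, and the intertwining
relation `Ĝ(f_cl(x)) · Df_cl(x) = A_cl · Ĝ(x)` holds everywhere, then
`W(x) := Ĝ(x)ᵀ M Ĝ(x)` is a contraction metric for `f_cl`: each `W(x)` is symmetric positive
definite and `Df_cl(x)ᵀ W(f_cl(x)) Df_cl(x) ⪯ γ W(x)` for all `x`. -/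
theorem koopman_contraction_metric {n p : ℕ}
    (fcl : (Fin n → ℝ) → (Fin n → ℝ)) (g : (Fin n → ℝ) → (Fin p → ℝ))
    (hfcl : Differentiable ℝ fcl) (hg : Differentiable ℝ g)
    (Acl M : Matrix (Fin p) (Fin p) ℝ) (hM : M.PosDef)
    (γ : ℝ) (hγ : γ ∈ Set.Ioo (0 : ℝ) 1)
    (hLyap : LoewnerLE (Aclᵀ * M * Acl) (γ • M))
    (hrank : ∀ x : Fin n → ℝ, LinearIndependent ℝ (fun j : Fin n => (jacobian g x)ᵀ j))
    (hintertwine : ∀ x : Fin n → ℝ,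
      jacobian g (fcl x) * jacobian fcl x = Acl * jacobian g x) :
    (∀ x : Fin n → ℝ, ((jacobian g x)ᵀ * M * jacobian g x).PosDef) ∧
      (∀ x : Fin n → ℝ,
        LoewnerLE
          ((jacobian fcl x)ᵀ * ((jacobian g (fcl x))ᵀ * M * jacobian g (fcl x)) *
            jacobian fcl x)
          (γ • ((jacobian g x)ᵀ * M * jacobian g x))) := by
  refine ⟨fun x => aux_posdef _ M hM (hrank x), fun x => ?_⟩
  exact aux_contract _ _ _ Acl M γ hLyap (hintertwine x)
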